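/- Let G = (V, E, w) be a weighted graph, Δ > 0, and N ⊆ V a set of centers such that every v ∈ V has some x ∈ N with d_G(v, x) ≤ Δ; for each v ∈ V set τ_v = |B_G(v, 3Δ) ∩ N|. Then for every parameter λ ≥ 2 there exists a probability distribution D over partitions of V such that every partition in the support of D is strongly 4Δ-bounded, and for every v ∈ V and every 0 < γ < 1/4, Pr_{P∼D}[B_G(v, γΔ) ⊄ P(v)] ≤ (1 − e^{-2γλ}) · (1 + τ_v/(e^{λ} − 1)), where P(v) denotes the cluster of P containing v. -/

import Mathlib

open MeasureTheory

namespace Pad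

variable {V : Type*}

/-- The weight of a walk: the sum of the weights of its edges. -/
def walkWeight (w : Sym2 V → ℝ) {G : SimpleGraph V} {u v : V} (p : G.Walk u v) : ℝ :=
  (p.darts.map fun d => w d.edge).sum

/-- Shortest-path distance in the weighted graph `(G, w)`. -/
noncomputable def wdist (w : Sym2 V → ℝ) (G : SimpleGraph V) (u v : V) : ℝ :=
  sInf {x | ∃ p : G.Walk u v, x = walkWeight w p}

/-- Distance from a vertex to a set of vertices. -/
noncomputable def wdistSet (w : Sym2 V → ℝ) (G : SimpleGraph V) (v : V) (A : Set V) : ℝ :=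
  sInf {x | ∃ a ∈ A, x = wdist w G v a}

/-- The closed ball of radius `r` around `v`. -/
def ball (w : Sym2 V → ℝ) (G : SimpleGraph V) (v : V) (r : ℝ) : Set V :=
  {u | wdist w G v u ≤ r}

/-- Weight of a walk of an induced subgraph, measured with the weights of `G`. -/
def walkWeightI (w : Sym2 V → ℝ) {G : SimpleGraph V} {C : Set V} {u v : C}
    (p : (G.induce C).Walk u v) : ℝ :=
  (p.darts.map fun d => w (Sym2.map Subtype.val d.edge)).sum

/-- The cluster `C` has strong diameter at most `Δ`: every two vertices of `C` are joined,
inside the induced subgraph `G[C]`, by a walk of weight at most `Δ`. -/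
def StronglyBounded (w : Sym2 V → ℝ) (G : SimpleGraph V) (C : Set V) (Δ : ℝ) : Prop :=
  ∀ u v : C, ∃ p : (G.induce C).Walk u v, walkWeightI w p ≤ Δ

/-- A partition of `V`, given by the map `cl` sending a vertex to its cluster. -/
structure Partition (V : Type*) where
  cl : V → Set V
  mem_cl : ∀ v, v ∈ cl v
  cl_eq : ∀ u v, u ∈ cl v → cl u = cl v

/-- A partition is strongly `Δ`-bounded if each of its clusters has strong diameter at most `Δ`. -/
def Partition.StronglyBounded (w : Sym2 V → ℝ) (G : SimpleGraph V) (P : Partition V)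
    (Δ : ℝ) : Prop :=
  ∀ v : V, Pad.StronglyBounded w G (P.cl v) Δ

/-- `(G, w)` has doubling dimension `ddim`: every ball of radius `2r` can be covered by
`2 ^ ddim` balls of radius `r`. -/
def Doubling (w : Sym2 V → ℝ) (G : SimpleGraph V) (ddim : ℝ) : Prop :=
  ∀ (x : V) (r : ℝ), 0 < r → ∃ T : Set V, T.Finite ∧ ((T.ncard : ℝ) ≤ (2 : ℝ) ^ ddim) ∧
    ball w G x (2 * r) ⊆ ⋃ y ∈ T, ball w G y r

/-- `G` has the complete graph `K_r` as a minor: there are `r` pairwise disjoint connected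
branch sets with an edge of `G` between any two of them. -/
def HasCliqueMinor (G : SimpleGraph V) (r : ℕ) : Prop :=
  ∃ B : Fin r → Set V,
    (∀ i, (G.induce (B i)).Connected) ∧
    (Pairwise fun i j => Disjoint (B i) (B j)) ∧
    ∀ i j : Fin r, i ≠ j → ∃ u ∈ B i, ∃ v ∈ B j, G.Adj u v

/-- A shortest path: a path whose weight equals the distance between its endpoints. -/
def IsShortestPath (w : Sym2 V → ℝ) (G : SimpleGraph V) {u v : V} (p : G.Walk u v) : Prop :=
  p.IsPath ∧ walkWeight w p = wdist w G u v

/-- `G` has an `r`-core with radius `Δ`: there are at most `r` shortest paths such that every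
vertex is within distance `Δ` of their union. -/
def HasCore (w : Sym2 V → ℝ) (G : SimpleGraph V) (r : ℕ) (Δ : ℝ) : Prop :=
  ∃ r' : ℕ, r' ≤ r ∧ ∃ (a b : Fin r' → V) (p : ∀ i, G.Walk (a i) (b i)),
    (∀ i, IsShortestPath w G (p i)) ∧
    ∀ v : V, ∃ i, ∃ u ∈ (p i).support, wdist w G v u ≤ Δ

end Pad

namespace PadProof
open Pad SimpleGraph
open scoped ENNReal

open Pad SimpleGraph

variable {V : Type*} {G : SimpleGraph V} {w : Sym2 V → ℝ}

lemma walkWeight_nonneg (hw : ∀ e, 0 ≤ w e) {u v : V} (p : G.Walk u v) :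
    0 ≤ walkWeight w p := by
  apply List.sum_nonneg; intro x hx
  simp only [List.mem_map] at hx
  obtain ⟨d, _, rfl⟩ := hx; exact hw _

lemma walkWeight_nil {u : V} : walkWeight w (Walk.nil : G.Walk u u) = 0 := rfl

lemma walkWeight_append {u v x : V} (p : G.Walk u v) (q : G.Walk v x) :
    walkWeight w (p.append q) = walkWeight w p + walkWeight w q := by
  simp [walkWeight, Walk.darts_append]

lemma walkWeight_reverse {u v : V} (p : G.Walk u v) :
    walkWeight w p.reverse = walkWeight w p := by
  simp only [walkWeight, Walk.darts_reverse, List.map_reverse, List.sum_reverse, List.map_map]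
  congr 1
  apply List.map_congr_left
  intro d _
  simp [Function.comp, Dart.edge, Sym2.eq_swap]

section Fin
variable [Fintype V]

/-- The set of walk weights. -/
def wSet (w : Sym2 V → ℝ) (G : SimpleGraph V) (u v : V) : Set ℝ :=
  {x | ∃ p : G.Walk u v, x = walkWeight w p}

lemma wdist_le (hw : ∀ e, 0 ≤ w e) {u v : V} (p : G.Walk u v) :
    wdist w G u v ≤ walkWeight w p := by
  have hbdd : BddBelow {x | ∃ p : G.Walk u v, x = walkWeight w p} := by
    refine ⟨0, ?_⟩
    rintro x ⟨q, rfl⟩; exact walkWeight_nonneg hw q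
  exact csInf_le hbdd ⟨p, rfl⟩

lemma wdist_nonneg (hw : ∀ e, 0 ≤ w e) {u v : V} (h : G.Reachable u v) :
    0 ≤ wdist w G u v := by
  obtain ⟨p⟩ := h
  have hne : {x | ∃ p : G.Walk u v, x = walkWeight w p}.Nonempty := ⟨_, p, rfl⟩
  apply le_csInf hne
  rintro x ⟨q, rfl⟩; exact walkWeight_nonneg hw q

lemma walkWeight_bypass_le [DecidableEq V] (hw : ∀ e, 0 ≤ w e) {u v : V} (p : G.Walk u v) :
    walkWeight w p.bypass ≤ walkWeight w p := by
  induction p with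
  | nil => simp [Walk.bypass]
  | cons ha p ih =>
    simp only [Walk.bypass]
    split_ifs with hs
    · refine le_trans ?_ (le_trans ih ?_)
      · have hspec := p.bypass.take_spec hs
        calc walkWeight w (p.bypass.dropUntil _ hs)
            ≤ walkWeight w (p.bypass.takeUntil _ hs) + walkWeight w (p.bypass.dropUntil _ hs) := by
              have := walkWeight_nonneg hw (p.bypass.takeUntil _ hs); linarith
          _ = walkWeight w p.bypass := by rw [← walkWeight_append, hspec]
      · have ih' := walkWeight_nonneg hw ((Walk.cons ha Walk.nil : G.Walk _ _))
        simp only [walkWeight, Walk.darts_cons, Walk.darts_nil, List.map_cons, List.map_nil,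
          List.sum_cons, List.sum_nil, add_zero] at ih'
        have hle : walkWeight w p ≤ walkWeight w (Walk.cons ha p) := by
          simp only [walkWeight, Walk.darts_cons, List.map_cons, List.sum_cons]
          linarith
        exact hle
    · have ih' := ih
      simp only [walkWeight, Walk.darts_cons, List.map_cons, List.sum_cons] at ih' ⊢
      linarith

/-- Existence of a weight-minimizing walk. -/
lemma exists_geodesic (hw : ∀ e, 0 ≤ w e) {u v : V} (h : G.Reachable u v) :
    ∃ p : G.Walk u v, walkWeight w p = wdist w G u v := by
  classical
  set S₀ : Set ℝ := (fun p : {p : G.Walk u v | p.length < Fintype.card V} =>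
    walkWeight w (p : G.Walk u v)) '' Set.univ with hS₀
  obtain ⟨p0⟩ := h
  have hp0 : p0.bypass.length < Fintype.card V := p0.bypass_isPath.length_lt
  have hS₀ne : S₀.Nonempty := ⟨_, ⟨⟨p0.bypass, hp0⟩, trivial, rfl⟩⟩
  have hS₀fin : S₀.Finite := (Set.finite_univ).image _
  have hmem := hS₀ne.csInf_mem hS₀fin
  obtain ⟨⟨q, hq⟩, -, hqe⟩ := hmem
  refine ⟨q, le_antisymm ?_ (wdist_le hw q)⟩
  change walkWeight w q = sInf S₀ at hqe
  rw [hqe]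
  have hne : {x | ∃ p : G.Walk u v, x = walkWeight w p}.Nonempty := ⟨_, p0, rfl⟩
  apply le_csInf hne
  rintro x ⟨r, rfl⟩
  refine le_trans (csInf_le (hS₀fin.bddBelow) ?_) (walkWeight_bypass_le hw r)
  exact ⟨⟨r.bypass, r.bypass_isPath.length_lt⟩, trivial, rfl⟩

lemma wdist_self (hw : ∀ e, 0 ≤ w e) (u : V) : wdist w G u u = 0 :=
  le_antisymm (wdist_le hw Walk.nil) (wdist_nonneg hw (Reachable.refl u))

lemma wdist_symm (hw : ∀ e, 0 ≤ w e) (hG : G.Connected) (u v : V) :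
    wdist w G u v = wdist w G v u := by
  have h1 : ∀ a b : V, wdist w G a b ≤ wdist w G b a := by
    intro a b
    obtain ⟨p, hp⟩ := exists_geodesic hw (hG a b).symm
    calc wdist w G a b ≤ walkWeight w p.reverse := wdist_le hw p.reverse
      _ = walkWeight w p := walkWeight_reverse p
      _ = wdist w G b a := hp
  exact le_antisymm (h1 u v) (h1 v u)

lemma wdist_triangle (hw : ∀ e, 0 ≤ w e) (hG : G.Connected) (u v x : V) :
    wdist w G u x ≤ wdist w G u v + wdist w G v x := by
  obtain ⟨p, hp⟩ := exists_geodesic hw (hG u v)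
  obtain ⟨q, hq⟩ := exists_geodesic hw (hG v x)
  calc wdist w G u x ≤ walkWeight w (p.append q) := wdist_le hw _
    _ = _ := by rw [walkWeight_append, hp, hq]

/-- Split a geodesic at a support vertex. -/
lemma geodesic_split (hw : ∀ e, 0 ≤ w e) {u x : V} {p : G.Walk u x}
    (hp : walkWeight w p = wdist w G u x) {y : V} (hy : y ∈ p.support) :
    ∃ t : ℝ, wdist w G u y ≤ t ∧ wdist w G y x ≤ wdist w G u x - t ∧ 0 ≤ t := by
  classical
  refine ⟨walkWeight w (p.takeUntil y hy), wdist_le hw _, ?_, walkWeight_nonneg hw _⟩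
  have hspec := p.take_spec hy
  have : walkWeight w (p.takeUntil y hy) + walkWeight w (p.dropUntil y hy) = walkWeight w p := by
    rw [← walkWeight_append, hspec]
  have h2 := wdist_le hw (p.dropUntil y hy)
  linarith [hp ▸ this]

/-- Lift a walk whose support lies in `C` to the induced subgraph. -/
lemma exists_induced_walk {C : Set V} {a b : V} (p : G.Walk a b)
    (hC : ∀ y ∈ p.support, y ∈ C) (ha : a ∈ C) (hb : b ∈ C) :
    ∃ q : (G.induce C).Walk ⟨a, ha⟩ ⟨b, hb⟩, walkWeightI w q = walkWeight w p := by
  induction p with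
  | nil => exact ⟨Walk.nil, rfl⟩
  | @cons a c b hadj p ih =>
    have hc : c ∈ C := hC c (by simp)
    have hC' : ∀ y ∈ p.support, y ∈ C := fun y hy => hC y (by simp [hy])
    obtain ⟨q, hq⟩ := ih hC' hc hb
    have hadj' : (G.induce C).Adj ⟨a, ha⟩ ⟨c, hc⟩ := hadj
    refine ⟨Walk.cons hadj' q, ?_⟩
    simp only [walkWeightI, walkWeight, Walk.darts_cons, List.map_cons, List.sum_cons] at hq ⊢
    rw [hq]
    rfl

end Fin

section Ctr
variable [Fintype V]

noncomputable def ord (V : Type*) [Fintype V] : V → ℕ := fun v => (Fintype.equivFin V v : ℕ)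

lemma ord_inj : Function.Injective (ord V) := fun a b h =>
  (Fintype.equivFin V).injective (Fin.ext h)

/-- key value: smaller is better. -/
noncomputable def kf (w : Sym2 V → ℝ) (G : SimpleGraph V) (ω : V → ℝ) (u x : V) : ℝ :=
  wdist w G u x - ω x

noncomputable def keymap (w : Sym2 V → ℝ) (G : SimpleGraph V) (ω : V → ℝ) (u x : V) : ℝ ×ₗ ℕ :=
  toLex (kf w G ω u x, ord V x)

def isCtr (w : Sym2 V → ℝ) (G : SimpleGraph V) (N : Set V) (ω : V → ℝ) (u x : V) : Prop :=
  x ∈ N ∧ ∀ z ∈ N, z ≠ x → keymap w G ω u x < keymap w G ω u z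

lemma keymap_inj (w : Sym2 V → ℝ) (G : SimpleGraph V) (ω : V → ℝ) (u : V) :
    Function.Injective (keymap w G ω u) := by
  intro a b h
  have h2 := congrArg (fun p => (ofLex p).2) h
  exact ord_inj h2

lemma exists_isCtr (w : Sym2 V → ℝ) (G : SimpleGraph V) {N : Set V} (hN : N.Nonempty)
    (ω : V → ℝ) (u : V) :
    ∃ x, isCtr w G N ω u x := by
  classical
  obtain ⟨x, hxs, hmin⟩ := Finset.exists_min_image (Set.toFinite N).toFinset
    (keymap w G ω u) ((Set.Finite.toFinset_nonempty _).mpr hN)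
  refine ⟨x, (Set.Finite.mem_toFinset _).mp hxs, fun z hz hne => ?_⟩
  have := hmin z ((Set.Finite.mem_toFinset _).mpr hz)
  rcases this.lt_or_eq with h | h
  · exact h
  · exact absurd (keymap_inj w G ω u h) hne.symm

lemma isCtr_unique {w : Sym2 V → ℝ} {G : SimpleGraph V} {N : Set V} {ω : V → ℝ} {u x y : V}
    (hx : isCtr w G N ω u x) (hy : isCtr w G N ω u y) : x = y := by
  by_contra hne
  exact absurd (hx.2 y hy.1 (Ne.symm hne)) (not_lt.mpr (hy.2 x hx.1 hne).le)

noncomputable def ctr (w : Sym2 V → ℝ) (G : SimpleGraph V) {N : Set V} (hN : N.Nonempty)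
    (ω : V → ℝ) (u : V) : V :=
  Classical.choose (exists_isCtr w G hN ω u)

lemma ctr_spec (w : Sym2 V → ℝ) (G : SimpleGraph V) {N : Set V} (hN : N.Nonempty)
    (ω : V → ℝ) (u : V) :
    isCtr w G N ω u (ctr w G hN ω u) :=
  Classical.choose_spec (exists_isCtr w G hN ω u)

lemma ctr_eq_of_isCtr {w : Sym2 V → ℝ} {G : SimpleGraph V} {N : Set V} (hN : N.Nonempty)
    {ω : V → ℝ} {u x : V}
    (h : isCtr w G N ω u x) : ctr w G hN ω u = x :=
  isCtr_unique (ctr_spec w G hN ω u) h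

noncomputable def part (w : Sym2 V → ℝ) (G : SimpleGraph V) {N : Set V} (hN : N.Nonempty)
    (ω : V → ℝ) : Partition V where
  cl v := {u | ctr w G hN ω u = ctr w G hN ω v}
  mem_cl v := rfl
  cl_eq u v h := by
    simp only [Set.mem_setOf_eq] at h
    ext z; simp only [Set.mem_setOf_eq, h]

lemma lex_lt_iff (a b : ℝ × ℕ) : toLex a < toLex b ↔ a.1 < b.1 ∨ (a.1 = b.1 ∧ a.2 < b.2) :=
  Prod.Lex.lt_iff

end Ctr

section Det
variable [Fintype V]

lemma dist_ctr_le (hw : ∀ e, 0 ≤ w e) {N : Set V} {Δ : ℝ} (hN : N.Nonempty)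
    (hcov : ∀ v : V, ∃ x ∈ N, wdist w G v x ≤ Δ)
    {ω : V → ℝ} (hbox : ∀ x, ω x ∈ Set.Icc (0:ℝ) Δ) (u : V) :
    wdist w G u (ctr w G hN ω u) ≤ 2 * Δ := by
  obtain ⟨xu, hxuN, hxud⟩ := hcov u
  have hspec := ctr_spec w G hN ω u
  set x := ctr w G hN ω u with hx
  have hkf : kf w G ω u x ≤ kf w G ω u xu := by
    by_cases hne : xu = x
    · exact le_of_eq (by rw [hne])
    · have := hspec.2 xu hxuN hne
      rw [keymap, keymap, lex_lt_iff] at this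
      rcases this with h | h
      · exact h.le
      · exact h.1.le
  have h1 : kf w G ω u xu ≤ Δ := by
    have := (hbox xu).1
    simp only [kf]; linarith
  have h2 : wdist w G u x = kf w G ω u x + ω x := by simp [kf]
  have := (hbox x).2
  simp only [kf] at hkf h1
  linarith

lemma ctr_support (hw : ∀ e, 0 ≤ w e) (hG : G.Connected) {N : Set V} (hN : N.Nonempty)
    {ω : V → ℝ} {u : V} {p : G.Walk u (ctr w G hN ω u)}
    (hp : walkWeight w p = wdist w G u (ctr w G hN ω u)) {y : V} (hy : y ∈ p.support) :
    ctr w G hN ω y = ctr w G hN ω u := by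
  have hspec := ctr_spec w G hN ω u
  obtain ⟨t, hty, htx, ht0⟩ := geodesic_split hw hp hy
  set x := ctr w G hN ω u with hx
  apply ctr_eq_of_isCtr hN
  refine ⟨hspec.1, fun z hz hne => ?_⟩
  have hzu := hspec.2 z hz hne
  rw [keymap, keymap, lex_lt_iff] at hzu ⊢
  have hA : kf w G ω y x ≤ kf w G ω u x - t := by
    simp only [kf]; linarith
  have hB : kf w G ω u z - t ≤ kf w G ω y z := by
    have htri := wdist_triangle hw hG u y z
    simp only [kf]; linarith
  rcases hzu with h | h
  · left
    simp only [kf] at hA hB h ⊢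
    linarith
  · rcases lt_or_eq_of_le (le_trans hA (le_trans
      (by linarith [h.1] : kf w G ω u x - t ≤ kf w G ω u z - t) hB)) with hlt | heq
    · left; exact hlt
    · right; exact ⟨heq, h.2⟩

lemma part_bounded (hw : ∀ e, 0 ≤ w e) (hG : G.Connected) {N : Set V} {Δ : ℝ} (hN : N.Nonempty)
    (hcov : ∀ v : V, ∃ x ∈ N, wdist w G v x ≤ Δ)
    {ω : V → ℝ} (hbox : ∀ x, ω x ∈ Set.Icc (0:ℝ) Δ) :
    (part w G hN ω).StronglyBounded w G (4 * Δ) := by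
  intro v u u'
  set x := ctr w G hN ω v with hxdef
  have hu : ctr w G hN ω (u : V) = x := u.2
  have hu' : ctr w G hN ω (u' : V) = x := u'.2
  obtain ⟨p, hp⟩ := exists_geodesic hw (hG ((u : V)) (ctr w G hN ω (u : V)))
  obtain ⟨p', hp'⟩ := exists_geodesic hw (hG ((u' : V)) (ctr w G hN ω (u' : V)))
  have hpcast : ∀ y ∈ p.support, ctr w G hN ω y = x := by
    intro y hy; rw [ctr_support hw hG hN hp hy, hu]
  have hp'cast : ∀ y ∈ p'.support, ctr w G hN ω y = x := by
    intro y hy; rw [ctr_support hw hG hN hp' hy, hu']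
  set q : G.Walk (u : V) (u' : V) :=
    (p.copy rfl hu).append (p'.copy rfl hu').reverse with hq
  have hqsupp : ∀ y ∈ q.support, y ∈ (part w G hN ω).cl v := by
    intro y hy
    rw [hq, Walk.mem_support_append_iff] at hy
    rcases hy with hy | hy
    · rw [Walk.support_copy] at hy
      exact hpcast y hy
    · rw [Walk.support_reverse, List.mem_reverse, Walk.support_copy] at hy
      exact hp'cast y hy
  have hqw : walkWeight w q ≤ 4 * Δ := by
    have e1 : walkWeight w (p.copy rfl hu) = walkWeight w p := by
      simp [walkWeight, Walk.darts_copy]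
    have e2 : walkWeight w ((p'.copy rfl hu').reverse) = walkWeight w p' := by
      rw [walkWeight_reverse]
      simp [walkWeight, Walk.darts_copy]
    rw [hq, walkWeight_append]
    rw [e1, e2, hp, hp']
    have b1 := dist_ctr_le hw hN hcov hbox (u : V)
    have b2 := dist_ctr_le hw hN hcov hbox (u' : V)
    linarith
  obtain ⟨q', hq'⟩ := exists_induced_walk q hqsupp (hqsupp _ (Walk.start_mem_support q))
    (hqsupp _ (Walk.end_mem_support q))
  refine ⟨(q'.copy (Subtype.ext rfl) (Subtype.ext rfl)), ?_⟩
  have hcw : walkWeightI w (q'.copy (Subtype.ext rfl) (Subtype.ext rfl)) = walkWeightI w q' := by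
    simp [walkWeightI, Walk.darts_copy]
  rw [hcw, hq']
  exact hqw

end Det

section Dom
variable [Fintype V]

lemma dominant_ball (hw : ∀ e, 0 ≤ w e) (hG : G.Connected) {N : Set V} {Δ : ℝ}
    (hN : N.Nonempty) (hcov : ∀ v : V, ∃ x ∈ N, wdist w G v x ≤ Δ) (hΔ : 0 < Δ)
    {ω : V → ℝ} (hbox : ∀ x, ω x ∈ Set.Icc (0:ℝ) Δ) (v : V) {ρ : ℝ}
    (hρ0 : 0 ≤ ρ) (hρ : 2 * ρ < Δ) {x : V} (hxS : x ∈ Pad.ball w G v (3*Δ) ∩ N)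
    (hdom : ∀ z ∈ Pad.ball w G v (3*Δ) ∩ N, z ≠ x → kf w G ω v x < kf w G ω v z - 2*ρ) :
    ∀ u ∈ Pad.ball w G v ρ, ctr w G hN ω u = x := by
  intro u hu
  obtain ⟨xv, hxvN, hxvd⟩ := hcov v
  have hxvS : xv ∈ Pad.ball w G v (3*Δ) ∩ N := ⟨by simp only [Pad.ball, Set.mem_setOf_eq]; linarith, hxvN⟩
  have hvu : wdist w G v u ≤ ρ := hu
  have huv : wdist w G u v ≤ ρ := by rw [wdist_symm hw hG]; exact hvu
  -- kf at v of x is at most Δ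
  have hkvx : kf w G ω v x ≤ Δ := by
    by_cases hxe : x = xv
    · subst hxe
      have := (hbox x).1
      simp only [kf]; linarith
    · have := hdom xv hxvS (fun he => hxe he.symm)
      have h2 : kf w G ω v xv ≤ Δ := by
        have := (hbox xv).1
        simp only [kf]; linarith
      linarith
  apply ctr_eq_of_isCtr hN
  refine ⟨hxS.2, fun z hz hne => ?_⟩
  rw [keymap, keymap, lex_lt_iff]
  left
  -- kf_u x ≤ kf_v x + ρ
  have hux : kf w G ω u x ≤ kf w G ω v x + ρ := by
    have htri := wdist_triangle hw hG u v x
    simp only [kf]; linarith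
  by_cases hzS : z ∈ Pad.ball w G v (3*Δ)
  · -- z relevant
    have h1 := hdom z ⟨hzS, hz⟩ hne
    have h2 : kf w G ω v z - ρ ≤ kf w G ω u z := by
      have htri := wdist_triangle hw hG v u z
      simp only [kf]; linarith
    simp only [kf] at hux h1 h2 ⊢
    linarith
  · -- z far
    have hzfar : 3*Δ < wdist w G v z := by
      simp only [Pad.ball, Set.mem_setOf_eq, not_le] at hzS; exact hzS
    have h2 : wdist w G v z - ρ ≤ wdist w G u z := by
      have htri := wdist_triangle hw hG v u z
      linarith
    have h3 : 2*Δ - ρ < kf w G ω u z := by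
      have := (hbox z).2
      simp only [kf]; linarith
    simp only [kf] at hux hkvx h3 ⊢
    linarith

lemma dominant_subset (hw : ∀ e, 0 ≤ w e) (hG : G.Connected) {N : Set V} {Δ : ℝ}
    (hN : N.Nonempty) (hcov : ∀ v : V, ∃ x ∈ N, wdist w G v x ≤ Δ) (hΔ : 0 < Δ)
    {ω : V → ℝ} (hbox : ∀ x, ω x ∈ Set.Icc (0:ℝ) Δ) (v : V) {ρ : ℝ}
    (hρ0 : 0 ≤ ρ) (hρ : 2 * ρ < Δ) {x : V} (hxS : x ∈ Pad.ball w G v (3*Δ) ∩ N)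
    (hdom : ∀ z ∈ Pad.ball w G v (3*Δ) ∩ N, z ≠ x → kf w G ω v x < kf w G ω v z - 2*ρ) :
    Pad.ball w G v ρ ⊆ (part w G hN ω).cl v := by
  intro u hu
  have h1 := dominant_ball hw hG hN hcov hΔ hbox v hρ0 hρ hxS hdom u hu
  have h2 := dominant_ball hw hG hN hcov hΔ hbox v hρ0 hρ hxS hdom v
    (by simp only [Pad.ball, Set.mem_setOf_eq, wdist_self hw v]; exact hρ0)
  show ctr w G hN ω u = ctr w G hN ω v
  rw [h1, h2]

end Dom



noncomputable def clamp (Δ t : ℝ) : ℝ := max 0 (min t Δ)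

lemma clamp_mono (Δ : ℝ) : Monotone (clamp Δ) := fun a b hab =>
  max_le_max le_rfl (min_le_min hab le_rfl)

lemma clamp_le_add (Δ s h : ℝ) (hh : 0 ≤ h) : clamp Δ (s + h) ≤ clamp Δ s + h := by
  unfold clamp
  have h1 : min (s + h) Δ ≤ min s Δ + h := by
    rcases le_total s Δ with h2 | h2
    · rw [min_eq_left h2]
      exact le_trans (min_le_left _ _) (by linarith)
    · rw [min_eq_right h2]
      exact le_trans (min_le_right _ _) (by linarith)
  apply max_le
  · have : (0:ℝ) ≤ max 0 (min s Δ) := le_max_left _ _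
    linarith
  · refine le_trans h1 ?_
    have : min s Δ ≤ max 0 (min s Δ) := le_max_right _ _
    linarith

lemma clamp_continuous (Δ : ℝ) : Continuous (clamp Δ) :=
  continuous_const.max (continuous_id.min continuous_const)

lemma clamp_nonpos (Δ t : ℝ) (ht : t ≤ 0) : clamp Δ t = 0 := by
  unfold clamp
  rcases le_total t Δ with h | h
  · rw [min_eq_left h, max_eq_left ht]
  · rw [min_eq_right h]
    have : Δ ≤ 0 := le_trans h ht
    rw [max_eq_left this]

lemma clamp_ge (Δ t : ℝ) (hΔ : 0 ≤ Δ) (ht : Δ ≤ t) : clamp Δ t = Δ := by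
  unfold clamp
  rw [min_eq_right ht, max_eq_right hΔ]

variable {lam Δ : ℝ}

lemma texp_c_pos (hl : 0 < lam) : 0 < 1 - Real.exp (-lam) := by
  have : Real.exp (-lam) < 1 := Real.exp_lt_one_iff.mpr (by linarith)
  linarith

/-- CDF of the truncated exponential with rate `lam/Δ` on `[0,Δ]`. -/
noncomputable def texpF (lam Δ : ℝ) (hl : 0 < lam) (hΔ : 0 < Δ) : StieltjesFunction ℝ where
  toFun t := (1 - Real.exp (-(lam/Δ) * clamp Δ t)) / (1 - Real.exp (-lam))
  mono' := by
    intro a b hab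
    have hc := texp_c_pos hl
    have hk : 0 ≤ lam / Δ := le_of_lt (div_pos hl hΔ)
    have hexp : Real.exp (-(lam/Δ) * clamp Δ b) ≤ Real.exp (-(lam/Δ) * clamp Δ a) := by
      apply Real.exp_le_exp.mpr
      have := clamp_mono Δ hab
      nlinarith
    apply div_le_div_of_nonneg_right ?_ hc.le
    linarith
  right_continuous' := by
    intro x
    apply Continuous.continuousWithinAt
    exact (continuous_const.sub ((Real.continuous_exp).comp
      ((continuous_const.mul (clamp_continuous Δ))))).div_const _


namespace TE2
variable (lam Δ : ℝ) (hl : 0 < lam) (hΔ : 0 < Δ)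

noncomputable def nu : Measure ℝ := (texpF lam Δ hl hΔ).measure

lemma texpF_apply (t : ℝ) :
    texpF lam Δ hl hΔ t = (1 - Real.exp (-(lam/Δ) * clamp Δ t)) / (1 - Real.exp (-lam)) := rfl

lemma texpF_tendsto_atBot : Filter.Tendsto (texpF lam Δ hl hΔ) Filter.atBot (nhds 0) := by
  apply Filter.Tendsto.congr' _ tendsto_const_nhds
  filter_upwards [Filter.eventually_le_atBot (0:ℝ)] with t ht
  rw [texpF_apply, clamp_nonpos Δ t ht]
  simp

lemma texpF_tendsto_atTop : Filter.Tendsto (texpF lam Δ hl hΔ) Filter.atTop (nhds 1) := by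
  apply Filter.Tendsto.congr' _ tendsto_const_nhds
  filter_upwards [Filter.eventually_ge_atTop Δ] with t ht
  rw [texpF_apply, clamp_ge Δ t hΔ.le ht]
  rw [neg_mul, div_mul_cancel₀ _ (ne_of_gt hΔ)]
  rw [div_self (ne_of_gt (texp_c_pos hl))]

instance : IsProbabilityMeasure (nu lam Δ hl hΔ) :=
  (texpF lam Δ hl hΔ).isProbabilityMeasure (texpF_tendsto_atBot lam Δ hl hΔ)
    (texpF_tendsto_atTop lam Δ hl hΔ)

lemma texpF_continuous : Continuous (texpF lam Δ hl hΔ) :=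
  (continuous_const.sub ((Real.continuous_exp).comp
    ((continuous_const.mul (clamp_continuous Δ))))).div_const _

lemma texpF_leftLim (x : ℝ) : Function.leftLim (texpF lam Δ hl hΔ) x = texpF lam Δ hl hΔ x := by
  apply leftLim_eq_of_tendsto
  · exact ((texpF_continuous lam Δ hl hΔ).continuousAt).continuousWithinAt

instance : NullSingletonClass (nu lam Δ hl hΔ) := by
  constructor
  intro x
  rw [nu, StieltjesFunction.measure_singleton, texpF_leftLim]
  simp

/-- the tail function, as a real number. -/
noncomputable def tail (s : ℝ) : ℝ :=
  (Real.exp (-(lam/Δ) * clamp Δ s) - Real.exp (-lam)) / (1 - Real.exp (-lam))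

lemma clamp_mem (hΔ : 0 < Δ) (s : ℝ) : clamp Δ s ∈ Set.Icc 0 Δ :=
  ⟨le_max_left _ _, max_le hΔ.le (min_le_right _ _)⟩

lemma tail_nonneg (hl : 0 < lam) (hΔ : 0 < Δ) (s : ℝ) : 0 ≤ tail lam Δ s := by
  apply div_nonneg _ (texp_c_pos hl).le
  have h1 : clamp Δ s ≤ Δ := (clamp_mem Δ hΔ s).2
  have : Real.exp (-lam) ≤ Real.exp (-(lam/Δ) * clamp Δ s) := by
    apply Real.exp_le_exp.mpr
    rw [neg_mul]
    have hk : 0 < lam / Δ := div_pos hl hΔ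
    have : (lam/Δ) * clamp Δ s ≤ (lam/Δ) * Δ := by nlinarith
    rw [div_mul_cancel₀ _ (ne_of_gt hΔ)] at this
    linarith
  linarith

lemma tail_le_one (hl : 0 < lam) (hΔ : 0 < Δ) (s : ℝ) : tail lam Δ s ≤ 1 := by
  rw [tail, div_le_one (texp_c_pos hl)]
  have h0 : 0 ≤ clamp Δ s := (clamp_mem Δ hΔ s).1
  have hk : 0 ≤ lam / Δ := (div_pos hl hΔ).le
  have : Real.exp (-(lam/Δ) * clamp Δ s) ≤ 1 := by
    rw [← Real.exp_zero]
    apply Real.exp_le_exp.mpr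
    nlinarith
  linarith

lemma texpF_nonneg (s : ℝ) : 0 ≤ texpF lam Δ hl hΔ s := by
  rw [texpF_apply]
  apply div_nonneg _ (texp_c_pos hl).le
  have h0 : 0 ≤ clamp Δ s := (clamp_mem Δ hΔ s).1
  have hk : 0 ≤ lam / Δ := (div_pos hl hΔ).le
  have : Real.exp (-(lam/Δ) * clamp Δ s) ≤ 1 := by
    rw [← Real.exp_zero]
    apply Real.exp_le_exp.mpr
    nlinarith
  linarith

lemma tail_add_F (s : ℝ) : tail lam Δ s = 1 - texpF lam Δ hl hΔ s := by
  rw [tail, texpF_apply]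
  have hc := texp_c_pos hl
  field_simp
  ring

lemma nu_Ioi (s : ℝ) : nu lam Δ hl hΔ (Set.Ioi s) = ENNReal.ofReal (tail lam Δ s) := by
  haveI : IsProbabilityMeasure (texpF lam Δ hl hΔ).measure :=
    (texpF lam Δ hl hΔ).isProbabilityMeasure (texpF_tendsto_atBot lam Δ hl hΔ)
      (texpF_tendsto_atTop lam Δ hl hΔ)
  rw [← Set.compl_Iic, nu,
    measure_compl measurableSet_Iic (measure_ne_top _ _)]
  rw [StieltjesFunction.measure_Iic _ (texpF_tendsto_atBot lam Δ hl hΔ)]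
  have h1 : (texpF lam Δ hl hΔ).measure Set.univ = 1 := by
    have := (texpF lam Δ hl hΔ).isProbabilityMeasure (texpF_tendsto_atBot lam Δ hl hΔ)
      (texpF_tendsto_atTop lam Δ hl hΔ)
    exact this.measure_univ
  rw [h1, sub_zero, tail_add_F lam Δ hl hΔ]
  rw [ENNReal.ofReal_sub _ (texpF_nonneg lam Δ hl hΔ s), ENNReal.ofReal_one]

/-- The key memorylessness-type inequality for the truncated exponential tail. -/
lemma tail_key (hl : 0 < lam) (hΔ : 0 < Δ) (s h : ℝ) (hh : 0 ≤ h) :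
    Real.exp (-(lam/Δ)*h) * tail lam Δ s
      - (1 - Real.exp (-(lam/Δ)*h)) * (Real.exp (-lam)/(1 - Real.exp (-lam)))
    ≤ tail lam Δ (s + h) := by
  have hc := texp_c_pos hl
  have hk : 0 ≤ lam/Δ := (div_pos hl hΔ).le
  have hmain : Real.exp (-(lam/Δ)*h) * Real.exp (-(lam/Δ)*clamp Δ s)
      ≤ Real.exp (-(lam/Δ)*clamp Δ (s+h)) := by
    rw [← Real.exp_add]
    apply Real.exp_le_exp.mpr
    have := clamp_le_add Δ s h hh
    nlinarith
  have heq : Real.exp (-(lam/Δ)*h) * tail lam Δ s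
      - (1 - Real.exp (-(lam/Δ)*h)) * (Real.exp (-lam)/(1 - Real.exp (-lam)))
      = (Real.exp (-(lam/Δ)*h) * Real.exp (-(lam/Δ)*clamp Δ s) - Real.exp (-lam))
        / (1 - Real.exp (-lam)) := by
    rw [tail]
    field_simp
    ring
  rw [heq, tail]
  apply div_le_div_of_nonneg_right _ hc.le
  linarith

end TE2


section Core
variable {V : Type*} [Fintype V] [DecidableEq V]

/-- The event that `x` beats every other element of `S` by margin `d` (at shift values `ω`). -/
def domEv (a : V → ℝ) (S : Finset V) (x : V) (d : ℝ) : Set (V → ℝ) :=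
  {ω | ∀ z ∈ S.erase x, ω z - a z + d < ω x - a x}

lemma measurable_domEv (a : V → ℝ) (S : Finset V) (x : V) (d : ℝ) :
    MeasurableSet (domEv a S x d) := by
  have : domEv a S x d = ⋂ z ∈ S.erase x, {ω : V → ℝ | ω z - a z + d < ω x - a x} := by
    ext ω; simp [domEv]
  rw [this]
  refine MeasurableSet.biInter (Set.to_countable _) (fun z _ => ?_)
  exact measurableSet_lt (by fun_prop) (by fun_prop)

lemma pi_inst {ι : Type*} (F1 F2 : Fintype ι) (μ : ι → Measure ℝ) :
    @Measure.pi ι (fun _ => ℝ) F1 (fun _ => inferInstance) μ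
      = @Measure.pi ι (fun _ => ℝ) F2 (fun _ => inferInstance) μ := by
  cases Subsingleton.elim F1 F2
  rfl

section Split
variable (ν : Measure ℝ) [IsProbabilityMeasure ν]

/-- Measure of a domination event via conditioning on the other coordinates. -/
lemma measure_domEv (a : V → ℝ) (S : Finset V) (x : V) (d : ℝ) (hE : (S.erase x).Nonempty) :
    Measure.pi (fun _ : V => ν) (domEv a S x d)
      = ∫⁻ r : ({i : V // ¬ i = x} → ℝ),
          ν (Set.Ioi ((S.erase x).attach.sup'
            (Finset.attach_nonempty_iff.mpr hE)
            (fun z => r ⟨z.1, (Finset.mem_erase.mp z.2).1⟩ - a z.1) + d + a x))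
          ∂(Measure.pi (fun _ : {i : V // ¬ i = x} => ν)) := by
  classical
  have hmp := measurePreserving_piEquivPiSubtypeProd (fun _ : V => ν) (fun i : V => i = x)
  set e := MeasurableEquiv.piEquivPiSubtypeProd (fun _ : V => ℝ) (fun i : V => i = x) with he
  set M : ({i : V // ¬ i = x} → ℝ) → ℝ := fun r => (S.erase x).attach.sup'
      (Finset.attach_nonempty_iff.mpr hE)
      (fun z => r ⟨z.1, (Finset.mem_erase.mp z.2).1⟩ - a z.1) with hM
  set sA : Set (({i : V // i = x} → ℝ) × ({i : V // ¬ i = x} → ℝ)) :=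
    ⋂ z ∈ (S.erase x).attach,
      {p : ({i : V // i = x} → ℝ) × ({i : V // ¬ i = x} → ℝ) |
        p.2 ⟨z.1, (Finset.mem_erase.mp z.2).1⟩ - a z.1 + d < p.1 ⟨x, rfl⟩ - a x} with hsA
  have hsAm : MeasurableSet sA := by
    refine MeasurableSet.biInter (Set.to_countable _) (fun z _ => ?_)
    exact measurableSet_lt (by fun_prop) (by fun_prop)
  have hpre : domEv a S x d = e ⁻¹' sA := by
    ext ω
    simp only [domEv, Set.mem_setOf_eq, hsA, Set.mem_preimage, Set.mem_iInter, he,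
      MeasurableEquiv.piEquivPiSubtypeProd, MeasurableEquiv.coe_mk,
      Equiv.piEquivPiSubtypeProd_apply]
    constructor
    · intro h z hz; exact h z.1 z.2
    · intro h z hz; exact h ⟨z, hz⟩ (Finset.mem_attach _ _)
  rw [hpre, hmp.measure_preimage hsAm.nullMeasurableSet, Measure.prod_apply_symm hsAm]
  refine lintegral_congr fun r => ?_
  have hsec : (fun t : {i : V // i = x} → ℝ => (t, r)) ⁻¹' sA
      = (MeasurableEquiv.funUnique {i : V // i = x} ℝ) ⁻¹' (Set.Ioi (M r + d + a x)) := by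
    ext t
    have h0 : (MeasurableEquiv.funUnique {i : V // i = x} ℝ) t = t ⟨x, rfl⟩ := by
      have hd : (default : {i : V // i = x}) = ⟨x, rfl⟩ := Subsingleton.elim _ _
      show t default = t ⟨x, rfl⟩
      rw [hd]
    simp only [Set.mem_preimage, hsA, Set.mem_iInter, Set.mem_setOf_eq, Set.mem_Ioi, h0]
    constructor
    · intro h
      have h2 : M r < t ⟨x, rfl⟩ - a x - d := by
        rw [hM, Finset.sup'_lt_iff]
        intro z hz
        have := h z hz
        linarith
      linarith
    · intro h z hz
      have h2 : M r < t ⟨x, rfl⟩ - a x - d := by linarith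
      rw [hM, Finset.sup'_lt_iff] at h2
      have := h2 z hz
      linarith
  rw [hsec]
  have hpe := (measurePreserving_funUnique ν ({i : V // i = x})).measure_preimage
    (s := Set.Ioi (M r + d + a x)) measurableSet_Ioi.nullMeasurableSet
  convert hpe using 2
  exact pi_inst _ _ _

/-- ties have measure zero. -/
lemma measure_tie [NullSingletonClass ν] (a : V → ℝ) (x z : V) (hzx : ¬ z = x) :
    Measure.pi (fun _ : V => ν) {ω : V → ℝ | ω x - a x = ω z - a z} = 0 := by
  classical
  have hmp := measurePreserving_piEquivPiSubtypeProd (fun _ : V => ν) (fun i : V => i = x)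
  set e := MeasurableEquiv.piEquivPiSubtypeProd (fun _ : V => ℝ) (fun i : V => i = x) with he
  set sT : Set (({i : V // i = x} → ℝ) × ({i : V // ¬ i = x} → ℝ)) :=
    {p | p.1 ⟨x, rfl⟩ - a x = p.2 ⟨z, hzx⟩ - a z} with hsT
  have hsTm : MeasurableSet sT := measurableSet_eq_fun (by fun_prop) (by fun_prop)
  have hpre : {ω : V → ℝ | ω x - a x = ω z - a z} = e ⁻¹' sT := by
    ext ω
    simp only [Set.mem_setOf_eq, hsT, Set.mem_preimage, he,
      MeasurableEquiv.piEquivPiSubtypeProd, MeasurableEquiv.coe_mk,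
      Equiv.piEquivPiSubtypeProd_apply]
  rw [hpre, hmp.measure_preimage hsTm.nullMeasurableSet, Measure.prod_apply_symm hsTm]
  have : ∀ r : ({i : V // ¬ i = x} → ℝ),
      (Measure.pi fun _ : {i : V // i = x} => ν) ((fun t => (t, r)) ⁻¹' sT) = 0 := by
    intro r
    have hsec : (fun t : {i : V // i = x} → ℝ => (t, r)) ⁻¹' sT
        = (MeasurableEquiv.funUnique {i : V // i = x} ℝ) ⁻¹' {r ⟨z, hzx⟩ - a z + a x} := by
      ext t
      have h0 : (MeasurableEquiv.funUnique {i : V // i = x} ℝ) t = t ⟨x, rfl⟩ := by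
        have hd : (default : {i : V // i = x}) = ⟨x, rfl⟩ := Subsingleton.elim _ _
        show t default = t ⟨x, rfl⟩
        rw [hd]
      simp only [Set.mem_preimage, hsT, Set.mem_setOf_eq, Set.mem_singleton_iff, h0]
      constructor <;> intro h <;> linarith
    rw [hsec]
    have hpe := (measurePreserving_funUnique ν ({i : V // i = x})).measure_preimage
      (s := {r ⟨z, hzx⟩ - a z + a x}) (measurableSet_singleton _).nullMeasurableSet
    rw [measure_singleton] at hpe
    convert hpe using 2
    exact pi_inst _ _ _
  have h2 : ∀ r : ({i : V // ¬ i = x} → ℝ),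
      (@Measure.pi {i : V // i = x} (fun _ => ℝ) (Subtype.fintype _) (fun _ => inferInstance)
        fun _ => ν) ((fun t => (t, r)) ⁻¹' sT) = 0 := by
    intro r
    have := this r
    convert this using 2
    exact pi_inst _ _ _
  exact (lintegral_congr h2).trans lintegral_zero

end Split

/-- The core probability estimate: with independent shifts, the probability that no element
dominates all others by margin `c` is small. -/
theorem core_prob (ν : Measure ℝ) [IsProbabilityMeasure ν] [NullSingletonClass ν]
    (eps err c : ℝ) (heps1 : eps ≤ 1) (hc : 0 ≤ c)
    (hkey : ∀ s : ℝ, ENNReal.ofReal eps * ν (Set.Ioi s)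
      ≤ ν (Set.Ioi (s + c)) + ENNReal.ofReal err)
    (a : V → ℝ) (S : Finset V) (hS : S.Nonempty) :
    Measure.pi (fun _ : V => ν) ((⋃ x ∈ S, domEv a S x c)ᶜ)
      ≤ 1 - ENNReal.ofReal eps + S.card * ENNReal.ofReal err := by
  classical
  set μ := Measure.pi (fun _ : V => ν) with hμ
  have hmeas : ∀ (x : V) (d : ℝ), MeasurableSet (domEv a S x d) := fun x d =>
    measurable_domEv a S x d
  -- per-element estimate
  have hAB : ∀ x ∈ S, ENNReal.ofReal eps * μ (domEv a S x 0)
      ≤ μ (domEv a S x c) + ENNReal.ofReal err := by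
    intro x hx
    by_cases hE : (S.erase x).Nonempty
    · rw [measure_domEv ν a S x 0 hE, measure_domEv ν a S x c hE]
      set M : ({i : V // ¬ i = x} → ℝ) → ℝ := fun r => (S.erase x).attach.sup'
          (Finset.attach_nonempty_iff.mpr hE)
          (fun z => r ⟨z.1, (Finset.mem_erase.mp z.2).1⟩ - a z.1) with hM
      rw [← lintegral_const_mul' _ _ ENNReal.ofReal_ne_top]
      have hstep : ∀ r : ({i : V // ¬ i = x} → ℝ),
          ENNReal.ofReal eps * ν (Set.Ioi (M r + 0 + a x))
            ≤ ν (Set.Ioi (M r + c + a x)) + ENNReal.ofReal err := by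
        intro r
        have := hkey (M r + 0 + a x)
        have harr : M r + 0 + a x + c = M r + c + a x := by ring
        rwa [harr] at this
      calc ∫⁻ r, ENNReal.ofReal eps * ν (Set.Ioi (M r + 0 + a x))
            ∂(Measure.pi (fun _ : {i : V // ¬ i = x} => ν))
          ≤ ∫⁻ r, (ν (Set.Ioi (M r + c + a x)) + ENNReal.ofReal err)
            ∂(Measure.pi (fun _ : {i : V // ¬ i = x} => ν)) := lintegral_mono hstep
        _ = (∫⁻ r, ν (Set.Ioi (M r + c + a x))
            ∂(Measure.pi (fun _ : {i : V // ¬ i = x} => ν))) + ENNReal.ofReal err := by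
            rw [lintegral_add_right _ measurable_const, lintegral_const, measure_univ, mul_one]
    · have huniv : ∀ d : ℝ, domEv a S x d = Set.univ := by
        intro d
        rw [Finset.not_nonempty_iff_eq_empty] at hE
        ext ω
        simp [domEv, hE]
      rw [huniv 0, huniv c, measure_univ]
      calc ENNReal.ofReal eps * 1 = ENNReal.ofReal eps := mul_one _
        _ ≤ 1 := by simpa using ENNReal.ofReal_le_ofReal heps1
        _ ≤ 1 + ENNReal.ofReal err := le_self_add
  -- disjointness
  have hdisj : ∀ d : ℝ, 0 ≤ d → (S : Set V).PairwiseDisjoint (fun x => domEv a S x d) := by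
    intro d hd x hx y hy hxy
    apply Set.disjoint_left.mpr
    intro ω hωx hωy
    have h1 := hωx y (Finset.mem_erase.mpr ⟨Ne.symm hxy, hy⟩)
    have h2 := hωy x (Finset.mem_erase.mpr ⟨hxy, hx⟩)
    linarith
  -- the union of the zero-margin events has full measure
  have hBunion : μ (⋃ x ∈ S, domEv a S x 0) = 1 := by
    have hTnull : μ (⋃ x ∈ S, ⋃ z ∈ S.erase x, {ω : V → ℝ | ω x - a x = ω z - a z}) = 0 := by
      apply measure_iUnion_null
      intro x
      apply measure_iUnion_null
      intro hx
      apply measure_iUnion_null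
      intro z
      apply measure_iUnion_null
      intro hz
      exact measure_tie ν a x z (Finset.mem_erase.mp hz).1
    have hsub : (⋃ x ∈ S, domEv a S x 0)ᶜ
        ⊆ ⋃ x ∈ S, ⋃ z ∈ S.erase x, {ω : V → ℝ | ω x - a x = ω z - a z} := by
      intro ω hω
      simp only [Set.mem_compl_iff, Set.mem_iUnion, not_exists] at hω
      obtain ⟨x, hxS, hxmax⟩ := Finset.exists_max_image S (fun x => ω x - a x) hS
      have hnot : ¬ (∀ z ∈ S.erase x, ω z - a z + 0 < ω x - a x) := fun h => hω x hxS h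
      push_neg at hnot
      obtain ⟨z, hz, hle⟩ := hnot
      refine Set.mem_iUnion.mpr ⟨x, Set.mem_iUnion.mpr ⟨hxS, Set.mem_iUnion.mpr ⟨z,
        Set.mem_iUnion.mpr ⟨hz, ?_⟩⟩⟩⟩
      have := hxmax z (Finset.mem_of_mem_erase hz)
      simp only [Set.mem_setOf_eq]
      linarith
    have hc0 : μ ((⋃ x ∈ S, domEv a S x 0)ᶜ) = 0 := measure_mono_null hsub hTnull
    have hm : MeasurableSet (⋃ x ∈ S, domEv a S x 0) :=
      MeasurableSet.biUnion (Set.to_countable _) (fun x _ => hmeas x 0)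
    have := measure_add_measure_compl (μ := μ) hm
    rw [hc0, add_zero] at this
    rw [this, measure_univ]
  have hsumB : ∑ x ∈ S, μ (domEv a S x 0) = 1 := by
    rw [← measure_biUnion_finset (hdisj 0 le_rfl) (fun x _ => hmeas x 0), hBunion]
  -- summing the per-element estimates
  have hsumA : ENNReal.ofReal eps
      ≤ (∑ x ∈ S, μ (domEv a S x c)) + S.card * ENNReal.ofReal err := by
    calc ENNReal.ofReal eps = ENNReal.ofReal eps * ∑ x ∈ S, μ (domEv a S x 0) := by
          rw [hsumB, mul_one]
      _ = ∑ x ∈ S, ENNReal.ofReal eps * μ (domEv a S x 0) := Finset.mul_sum _ _ _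
      _ ≤ ∑ x ∈ S, (μ (domEv a S x c) + ENNReal.ofReal err) := Finset.sum_le_sum hAB
      _ = (∑ x ∈ S, μ (domEv a S x c)) + ∑ _x ∈ S, ENNReal.ofReal err := by
          rw [Finset.sum_add_distrib]
      _ = (∑ x ∈ S, μ (domEv a S x c)) + S.card * ENNReal.ofReal err := by
          rw [Finset.sum_const, nsmul_eq_mul]
  -- wrap up
  have hmU : MeasurableSet (⋃ x ∈ S, domEv a S x c) :=
    MeasurableSet.biUnion (Set.to_countable _) (fun x _ => hmeas x c)
  have hU : μ (⋃ x ∈ S, domEv a S x c) = ∑ x ∈ S, μ (domEv a S x c) :=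
    measure_biUnion_finset (hdisj c hc) (fun x _ => hmeas x c)
  rw [measure_compl hmU (measure_ne_top μ _), measure_univ, hU]
  rw [tsub_le_iff_right]
  have h1 : (1:ℝ≥0∞) = (1 - ENNReal.ofReal eps) + ENNReal.ofReal eps := by
    rw [tsub_add_cancel_of_le (by simpa using ENNReal.ofReal_le_ofReal heps1)]
  calc (1:ℝ≥0∞) = (1 - ENNReal.ofReal eps) + ENNReal.ofReal eps := h1
    _ ≤ (1 - ENNReal.ofReal eps) + ((∑ x ∈ S, μ (domEv a S x c)) + S.card * ENNReal.ofReal err) :=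
        add_le_add_right hsumA _
    _ = 1 - ENNReal.ofReal eps + S.card * ENNReal.ofReal err + ∑ x ∈ S, μ (domEv a S x c) := by
        ring


end Core

lemma part_ext {V : Type*} {P Q : Partition V} (h : P.cl = Q.cl) : P = Q := by
  cases P; cases Q
  simp only [Pad.Partition.mk.injEq]
  exact h

instance partitionFinite {V : Type*} [Finite V] : Finite (Partition V) :=
  Finite.of_injective Partition.cl (fun _ _ h => part_ext h)



section Fibers
variable {V : Type*} [Fintype V]

lemma ctr_eq_iff_isCtr (w : Sym2 V → ℝ) (G : SimpleGraph V) {N : Set V} (hN : N.Nonempty)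
    {ω : V → ℝ} {u x : V} : ctr w G hN ω u = x ↔ isCtr w G N ω u x :=
  ⟨fun h => h ▸ ctr_spec w G hN ω u, ctr_eq_of_isCtr hN⟩

lemma measurable_keyset (w : Sym2 V → ℝ) (G : SimpleGraph V) (u x z : V) :
    MeasurableSet {ω : V → ℝ | keymap w G ω u x < keymap w G ω u z} := by
  have hset : {ω : V → ℝ | keymap w G ω u x < keymap w G ω u z}
      = ({ω : V → ℝ | kf w G ω u x < kf w G ω u z} ∪
        ({ω : V → ℝ | kf w G ω u x = kf w G ω u z} ∩ {ω : V → ℝ | ord V x < ord V z})) := by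
    ext ω
    simp only [Set.mem_setOf_eq, Set.mem_union, Set.mem_inter_iff, keymap, lex_lt_iff]
  rw [hset]
  have hm1 : Measurable (fun ω : V → ℝ => kf w G ω u x) := by
    simp only [kf]; fun_prop
  have hm2 : Measurable (fun ω : V → ℝ => kf w G ω u z) := by
    simp only [kf]; fun_prop
  refine (measurableSet_lt hm1 hm2).union ((measurableSet_eq_fun hm1 hm2).inter ?_)
  by_cases h : ord V x < ord V z
  · simp only [h]; exact MeasurableSet.univ.congr (by ext ω; simp [h])
  · have : {ω : V → ℝ | ord V x < ord V z} = ∅ := by ext ω; simp [h]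
    rw [this]; exact MeasurableSet.empty

lemma measurable_ctr_fiber (w : Sym2 V → ℝ) (G : SimpleGraph V) {N : Set V} (hN : N.Nonempty)
    (u x : V) : MeasurableSet {ω : V → ℝ | ctr w G hN ω u = x} := by
  by_cases hxN : x ∈ N
  · have hset : {ω : V → ℝ | ctr w G hN ω u = x}
        = ⋂ (z : V), ⋂ (_ : z ∈ N), ⋂ (_ : z ≠ x),
            {ω : V → ℝ | keymap w G ω u x < keymap w G ω u z} := by
      ext ω
      simp only [Set.mem_setOf_eq, Set.mem_iInter, ctr_eq_iff_isCtr w G hN, isCtr]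
      constructor
      · intro h z hz hne; exact h.2 z hz hne
      · intro h; exact ⟨hxN, h⟩
    rw [hset]
    exact MeasurableSet.iInter fun z => MeasurableSet.iInter fun _ =>
      MeasurableSet.iInter fun _ => measurable_keyset w G u x z
  · have hset : {ω : V → ℝ | ctr w G hN ω u = x} = ∅ := by
      ext ω
      simp only [Set.mem_setOf_eq, Set.mem_empty_iff_false, iff_false]
      intro h
      exact hxN (h ▸ (ctr_spec w G hN ω u).1)
    rw [hset]; exact MeasurableSet.empty

lemma measurable_ctr_eq (w : Sym2 V → ℝ) (G : SimpleGraph V) {N : Set V} (hN : N.Nonempty)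
    (u v : V) : MeasurableSet {ω : V → ℝ | ctr w G hN ω u = ctr w G hN ω v} := by
  have hset : {ω : V → ℝ | ctr w G hN ω u = ctr w G hN ω v}
      = ⋃ (x : V), ({ω : V → ℝ | ctr w G hN ω u = x} ∩ {ω : V → ℝ | ctr w G hN ω v = x}) := by
    ext ω
    simp only [Set.mem_setOf_eq, Set.mem_iUnion, Set.mem_inter_iff]
    constructor
    · intro h; exact ⟨ctr w G hN ω v, h, rfl⟩
    · rintro ⟨x, h1, h2⟩; rw [h1, h2]
  rw [hset]
  exact MeasurableSet.iUnion fun x =>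
    (measurable_ctr_fiber w G hN u x).inter (measurable_ctr_fiber w G hN v x)

lemma measurable_part_fiber (w : Sym2 V → ℝ) (G : SimpleGraph V) {N : Set V} (hN : N.Nonempty)
    (P : Partition V) : MeasurableSet {ω : V → ℝ | part w G hN ω = P} := by
  classical
  have hchar : {ω : V → ℝ | part w G hN ω = P} = ⋂ (v : V), ⋂ (u : V),
      (if u ∈ P.cl v then {ω : V → ℝ | ctr w G hN ω u = ctr w G hN ω v}
       else {ω : V → ℝ | ctr w G hN ω u = ctr w G hN ω v}ᶜ) := by
    ext ω
    simp only [Set.mem_setOf_eq, Set.mem_iInter]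
    constructor
    · rintro rfl v u
      split_ifs with h
      · exact h
      · exact h
    · intro h
      apply part_ext
      funext v
      ext u
      have := h v u
      by_cases hu : u ∈ P.cl v
      · rw [if_pos hu] at this
        simp only [part, Set.mem_setOf_eq]
        exact iff_of_true this hu
      · rw [if_neg hu] at this
        simp only [part, Set.mem_setOf_eq]
        exact iff_of_false this hu
  rw [hchar]
  refine MeasurableSet.iInter fun v => MeasurableSet.iInter fun u => ?_
  by_cases hu : u ∈ P.cl v
  · rw [if_pos hu]; exact measurable_ctr_eq w G hN u v
  · rw [if_neg hu]; exact (measurable_ctr_eq w G hN u v).compl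

lemma measurable_part (w : Sym2 V → ℝ) (G : SimpleGraph V) {N : Set V} (hN : N.Nonempty) :
    @Measurable (V → ℝ) (Partition V) _ ⊤ (part w G hN) := by
  intro t _
  haveI : Finite (Partition V) := partitionFinite
  have hset : part w G hN ⁻¹' t = ⋃ (P : t), {ω : V → ℝ | part w G hN ω = (P : Partition V)} := by
    ext ω
    simp only [Set.mem_preimage, Set.mem_iUnion, Set.mem_setOf_eq]
    constructor
    · intro h; exact ⟨⟨_, h⟩, rfl⟩
    · rintro ⟨⟨P, hP⟩, h⟩; rw [h]; exact hP
  rw [hset]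
  exact MeasurableSet.iUnion fun P => measurable_part_fiber w G hN _

end Fibers

namespace TE2
variable (lam Δ : ℝ)

lemma texpF_zero (hl : 0 < lam) (hΔ : 0 < Δ) : texpF lam Δ hl hΔ 0 = 0 := by
  rw [texpF_apply, clamp_nonpos Δ 0 le_rfl]
  simp

lemma texpF_Delta (hl : 0 < lam) (hΔ : 0 < Δ) : texpF lam Δ hl hΔ Δ = 1 := by
  rw [texpF_apply, clamp_ge Δ Δ hΔ.le le_rfl, neg_mul, div_mul_cancel₀ _ (ne_of_gt hΔ),
    div_self (ne_of_gt (texp_c_pos hl))]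

lemma nu_Icc (hl : 0 < lam) (hΔ : 0 < Δ) : nu lam Δ hl hΔ (Set.Icc 0 Δ) = 1 := by
  rw [nu, StieltjesFunction.measure_Icc, texpF_leftLim, texpF_zero lam Δ hl hΔ,
    texpF_Delta lam Δ hl hΔ]
  simp

lemma nu_compl_Icc (hl : 0 < lam) (hΔ : 0 < Δ) : nu lam Δ hl hΔ ((Set.Icc 0 Δ)ᶜ) = 0 := by
  rw [measure_compl measurableSet_Icc (measure_ne_top _ _), nu_Icc lam Δ hl hΔ, measure_univ]
  simp

lemma nu_key (hl : 0 < lam) (hΔ : 0 < Δ) {h : ℝ} (hh : 0 ≤ h) (s : ℝ) :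
    ENNReal.ofReal (Real.exp (-(lam/Δ)*h)) * nu lam Δ hl hΔ (Set.Ioi s)
      ≤ nu lam Δ hl hΔ (Set.Ioi (s + h)) + ENNReal.ofReal
        ((1 - Real.exp (-(lam/Δ)*h)) * (Real.exp (-lam)/(1 - Real.exp (-lam)))) := by
  have herr0 : 0 ≤ (1 - Real.exp (-(lam/Δ)*h)) * (Real.exp (-lam)/(1 - Real.exp (-lam))) := by
    apply mul_nonneg
    · have : Real.exp (-(lam/Δ)*h) ≤ 1 := by
        rw [← Real.exp_zero]
        apply Real.exp_le_exp.mpr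
        have : 0 ≤ lam/Δ := (div_pos hl hΔ).le
        nlinarith
      linarith
    · exact div_nonneg (Real.exp_nonneg _) (texp_c_pos hl).le
  rw [nu_Ioi, nu_Ioi, ← ENNReal.ofReal_mul (Real.exp_nonneg _),
    ← ENNReal.ofReal_add (tail_nonneg lam Δ hl hΔ _) herr0]
  apply ENNReal.ofReal_le_ofReal
  have := tail_key lam Δ hl hΔ s h hh
  linarith

end TE2

section BoxNull
variable {V : Type*} [Fintype V]

lemma box_compl_null (lam Δ : ℝ) (hl : 0 < lam) (hΔ : 0 < Δ) :
    Measure.pi (fun _ : V => TE2.nu lam Δ hl hΔ)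
      ({ω : V → ℝ | ∀ x, ω x ∈ Set.Icc (0:ℝ) Δ}ᶜ) = 0 := by
  have hset : {ω : V → ℝ | ∀ x, ω x ∈ Set.Icc (0:ℝ) Δ}ᶜ
      = ⋃ (x : V), (Function.eval x) ⁻¹' ((Set.Icc (0:ℝ) Δ)ᶜ) := by
    ext ω
    simp only [Set.mem_compl_iff, Set.mem_setOf_eq, not_forall, Set.mem_iUnion, Set.mem_preimage]
  rw [hset]
  exact measure_iUnion_null fun x =>
    Measure.pi_eval_preimage_null _ (TE2.nu_compl_Icc lam Δ hl hΔ)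

end BoxNull

end PadProof


/-- (Generalized version of the main technical theorem.) Given centers `N`
with covering radius `Δ`, setting `τ_v = |B_G(v,3Δ) ∩ N|`, for every `λ ≥ 2` there is a
distribution over strongly `4Δ`-bounded partitions in which, for `0 < γ < 1/4`, the ball
`B_G(v, γΔ)` is cut with probability at most `(1 - e^{-2γλ})·(1 + τ_v/(e^λ - 1))`. -/
theorem strongly_padded_decomposition_local
    (V : Type) [Fintype V] (G : SimpleGraph V) (hG : G.Connected)
    (w : Sym2 V → ℝ) (hw : ∀ e, 0 ≤ w e)
    (Δ : ℝ) (hΔ : 0 < Δ)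
    (N : Set V)
    (hcov : ∀ v : V, ∃ x ∈ N, Pad.wdist w G v x ≤ Δ)
    (lam : ℝ) (hlam : 2 ≤ lam) :
    ∃ D : PMF (Pad.Partition V),
      (∀ P ∈ D.support, Pad.Partition.StronglyBounded w G P (4 * Δ)) ∧
      ∀ (v : V) (γ : ℝ), 0 < γ → γ < 1 / 4 →
        D.toOuterMeasure {P | ¬ Pad.ball w G v (γ * Δ) ⊆ P.cl v} ≤
          ENNReal.ofReal ((1 - Real.exp (-(2 * γ * lam))) *
            (1 + ((Pad.ball w G v (3 * Δ) ∩ N).ncard : ℝ) / (Real.exp lam - 1))) := by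
  classical
  have hlam0 : (0:ℝ) < lam := lt_of_lt_of_le two_pos hlam
  haveI : Nonempty V := hG.nonempty
  obtain ⟨x0, hx0N, -⟩ := hcov (Classical.arbitrary V)
  have hN : N.Nonempty := ⟨x0, hx0N⟩
  letI : MeasurableSpace (Pad.Partition V) := ⊤
  haveI : Finite (Pad.Partition V) := PadProof.partitionFinite
  haveI : MeasurableSingletonClass (Pad.Partition V) :=
    ⟨fun _ => MeasurableSpace.measurableSet_top⟩
  have hF : @Measurable (V → ℝ) (Pad.Partition V) _ ⊤ (PadProof.part w G hN) :=
    PadProof.measurable_part w G hN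
  haveI : IsProbabilityMeasure ((Measure.pi (fun _ : V => PadProof.TE2.nu lam Δ hlam0 hΔ)).map
      (PadProof.part w G hN)) := Measure.isProbabilityMeasure_map hF.aemeasurable
  have hbox0 : Measure.pi (fun _ : V => PadProof.TE2.nu lam Δ hlam0 hΔ)
      ({ω : V → ℝ | ∀ x, ω x ∈ Set.Icc (0:ℝ) Δ}ᶜ) = 0 :=
    PadProof.box_compl_null lam Δ hlam0 hΔ
  refine ⟨((Measure.pi (fun _ : V => PadProof.TE2.nu lam Δ hlam0 hΔ)).map
      (PadProof.part w G hN)).toPMF, ?_, ?_⟩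
  · -- all partitions in the support are strongly bounded
    intro P hP
    have hP' : ((Measure.pi (fun _ : V => PadProof.TE2.nu lam Δ hlam0 hΔ)).map
        (PadProof.part w G hN)) {P} ≠ 0 := by
      rwa [PMF.mem_support_iff, Measure.toPMF_apply] at hP
    rw [Measure.map_apply hF MeasurableSpace.measurableSet_top] at hP'
    have hne : ((PadProof.part w G hN ⁻¹' {P})
        ∩ {ω : V → ℝ | ∀ x, ω x ∈ Set.Icc (0:ℝ) Δ}).Nonempty := by
      by_contra hcon
      rw [Set.not_nonempty_iff_eq_empty] at hcon
      apply hP'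
      refine measure_mono_null ?_ hbox0
      intro ω hω
      simp only [Set.mem_compl_iff, Set.mem_setOf_eq]
      intro hbox
      have : ω ∈ (PadProof.part w G hN ⁻¹' {P})
          ∩ {ω : V → ℝ | ∀ x, ω x ∈ Set.Icc (0:ℝ) Δ} := ⟨hω, hbox⟩
      rw [hcon] at this
      exact this
    obtain ⟨ω, hωP, hωbox⟩ := hne
    have hPeq : P = PadProof.part w G hN ω := (Set.mem_singleton_iff.mp hωP).symm
    rw [hPeq]
    exact PadProof.part_bounded hw hG hN hcov hωbox
  · -- the padding bound
    intro v γ hγ0 hγ4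
    set eps := Real.exp (-(2*γ*lam)) with hepsdef
    set err := (1 - eps) * (Real.exp (-lam)/(1 - Real.exp (-lam))) with herrdef
    have heps0 : 0 ≤ eps := Real.exp_nonneg _
    have heps1 : eps ≤ 1 := by
      rw [hepsdef, ← Real.exp_zero]
      apply Real.exp_le_exp.mpr
      nlinarith
    have hcpos := PadProof.texp_c_pos hlam0
    have herr0 : 0 ≤ err := by
      apply mul_nonneg (by linarith)
      exact div_nonneg (Real.exp_nonneg _) hcpos.le
    have hSfin : (Pad.ball w G v (3*Δ) ∩ N).Finite := Set.toFinite _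
    have hSne : hSfin.toFinset.Nonempty := by
      obtain ⟨xv, hxvN, hxvd⟩ := hcov v
      refine ⟨xv, hSfin.mem_toFinset.mpr ⟨?_, hxvN⟩⟩
      simp only [Pad.ball, Set.mem_setOf_eq]
      linarith
    have houter : (((Measure.pi (fun _ : V => PadProof.TE2.nu lam Δ hlam0 hΔ)).map
        (PadProof.part w G hN)).toPMF).toOuterMeasure
          {P | ¬ Pad.ball w G v (γ*Δ) ⊆ P.cl v}
        = Measure.pi (fun _ : V => PadProof.TE2.nu lam Δ hlam0 hΔ)
          ((PadProof.part w G hN) ⁻¹' {P | ¬ Pad.ball w G v (γ*Δ) ⊆ P.cl v}) := by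
      rw [← PMF.toMeasure_apply_eq_toOuterMeasure_apply _ MeasurableSpace.measurableSet_top,
        Measure.toPMF_toMeasure, Measure.map_apply hF MeasurableSpace.measurableSet_top]
    rw [houter]
    have hsub : (PadProof.part w G hN) ⁻¹' {P | ¬ Pad.ball w G v (γ*Δ) ⊆ P.cl v}
        ⊆ ((⋃ x ∈ hSfin.toFinset, PadProof.domEv (fun z => Pad.wdist w G v z)
            hSfin.toFinset x (2*(γ*Δ)))ᶜ)
          ∪ ({ω : V → ℝ | ∀ x, ω x ∈ Set.Icc (0:ℝ) Δ}ᶜ) := by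
      intro ω hω
      simp only [Set.mem_preimage, Set.mem_setOf_eq] at hω
      by_cases hbox : ∀ x, ω x ∈ Set.Icc (0:ℝ) Δ
      · left
        simp only [Set.mem_compl_iff]
        intro hmem
        apply hω
        rw [Set.mem_iUnion] at hmem
        obtain ⟨x, hx⟩ := hmem
        rw [Set.mem_iUnion] at hx
        obtain ⟨hxSf, hdom⟩ := hx
        have hxS : x ∈ Pad.ball w G v (3*Δ) ∩ N := hSfin.mem_toFinset.mp hxSf
        refine PadProof.dominant_subset hw hG hN hcov hΔ hbox v (ρ := γ*Δ)
          (by positivity) (by nlinarith) hxS ?_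
        intro z hz hne
        have hzf : z ∈ hSfin.toFinset.erase x :=
          Finset.mem_erase.mpr ⟨hne, hSfin.mem_toFinset.mpr hz⟩
        have := hdom z hzf
        simp only [PadProof.kf]
        linarith
      · right
        simp only [Set.mem_compl_iff, Set.mem_setOf_eq]
        exact hbox
    have hkey : ∀ s : ℝ, ENNReal.ofReal eps
        * (PadProof.TE2.nu lam Δ hlam0 hΔ) (Set.Ioi s)
        ≤ (PadProof.TE2.nu lam Δ hlam0 hΔ) (Set.Ioi (s + 2*(γ*Δ))) + ENNReal.ofReal err := by
      intro s
      have h1 := PadProof.TE2.nu_key lam Δ hlam0 hΔ (h := 2*(γ*Δ)) (by positivity) s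
      have hexp : Real.exp (-(lam/Δ)*(2*(γ*Δ))) = eps := by
        rw [hepsdef]
        congr 1
        field_simp
      rwa [hexp] at h1
    have hcore := PadProof.core_prob (PadProof.TE2.nu lam Δ hlam0 hΔ) eps err (2*(γ*Δ))
      heps1 (by positivity) hkey (fun z => Pad.wdist w G v z) hSfin.toFinset hSne
    have hEE : Real.exp (-lam)/(1 - Real.exp (-lam)) = 1/(Real.exp lam - 1) := by
      have h1 : Real.exp lam ≠ 0 := (Real.exp_pos _).ne'
      have h2 : (1:ℝ) < Real.exp lam := by
        rw [← Real.exp_zero]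
        exact Real.exp_lt_exp.mpr hlam0
      rw [div_eq_div_iff hcpos.ne' (by nlinarith : (0:ℝ) < Real.exp lam - 1).ne']
      have hmul : Real.exp (-lam) * Real.exp lam = 1 := by
        rw [← Real.exp_add]; simp
      nlinarith [hmul]
    have hτ : ((Pad.ball w G v (3*Δ) ∩ N).ncard : ℝ) = (hSfin.toFinset.card : ℝ) := by
      rw [Set.ncard_eq_toFinset_card _ hSfin]
    calc Measure.pi (fun _ : V => PadProof.TE2.nu lam Δ hlam0 hΔ)
          ((PadProof.part w G hN) ⁻¹' {P | ¬ Pad.ball w G v (γ*Δ) ⊆ P.cl v})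
        ≤ Measure.pi (fun _ : V => PadProof.TE2.nu lam Δ hlam0 hΔ)
            (((⋃ x ∈ hSfin.toFinset, PadProof.domEv (fun z => Pad.wdist w G v z)
              hSfin.toFinset x (2*(γ*Δ)))ᶜ)
            ∪ ({ω : V → ℝ | ∀ x, ω x ∈ Set.Icc (0:ℝ) Δ}ᶜ)) := measure_mono hsub
      _ ≤ Measure.pi (fun _ : V => PadProof.TE2.nu lam Δ hlam0 hΔ)
            ((⋃ x ∈ hSfin.toFinset, PadProof.domEv (fun z => Pad.wdist w G v z)
              hSfin.toFinset x (2*(γ*Δ)))ᶜ)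
          + Measure.pi (fun _ : V => PadProof.TE2.nu lam Δ hlam0 hΔ)
            ({ω : V → ℝ | ∀ x, ω x ∈ Set.Icc (0:ℝ) Δ}ᶜ) := measure_union_le _ _
      _ = Measure.pi (fun _ : V => PadProof.TE2.nu lam Δ hlam0 hΔ)
            ((⋃ x ∈ hSfin.toFinset, PadProof.domEv (fun z => Pad.wdist w G v z)
              hSfin.toFinset x (2*(γ*Δ)))ᶜ) := by rw [hbox0, add_zero]
      _ ≤ 1 - ENNReal.ofReal eps + hSfin.toFinset.card * ENNReal.ofReal err := hcore
      _ = ENNReal.ofReal (1 - eps) + ENNReal.ofReal (hSfin.toFinset.card * err) := by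
          rw [ENNReal.ofReal_sub _ heps0, ENNReal.ofReal_one,
            ENNReal.ofReal_mul (Nat.cast_nonneg _), ENNReal.ofReal_natCast]
      _ = ENNReal.ofReal ((1 - eps) + hSfin.toFinset.card * err) :=
          (ENNReal.ofReal_add (by linarith) (mul_nonneg (Nat.cast_nonneg _) herr0)).symm
      _ ≤ ENNReal.ofReal ((1 - Real.exp (-(2 * γ * lam))) *
            (1 + ((Pad.ball w G v (3 * Δ) ∩ N).ncard : ℝ) / (Real.exp lam - 1))) := by
          apply ENNReal.ofReal_le_ofReal
          rw [herrdef, hEE, hτ]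
          apply le_of_eq
          ring
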